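/- arXiv:1802.08443 — 2 statements merged into one kernel-verified Lean document; each statement's English description precedes it below -/
import Mathlib

section
/- As formal power series over ℚ, the series H(x) = 49x · (x^7;x^7)_∞^7 / (x;x)_∞^8 satisfies H(x) = 49x · exp(∑_{n≥1} e_n x^n), where for n = 7^m·n' with m ≥ 0 and 7 ∤ n', e_n = (σ(n)/n)·(1 + 42/(7^{m+1} − 1)). -/
noncomputable section

/-- `sigma' n` is the sum of all positive divisors of `n` (including `1` and `n`). -/
def sigma' (n : ℕ) : ℕ := ∑ d ∈ n.divisors, d

/-- The q-Pochhammer symbol `(x^r; x^r)_∞ = ∏_{k≥1} (1 − x^{r·k})` as a formal power series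
over `ℚ`.  The factor for index `k` only affects coefficients of degree `≥ r·k`, so the `n`-th
coefficient of the infinite product equals that of the finite product over `k = 1, …, n+1`. -/
def pochhammerPS (r : ℕ) : PowerSeries ℚ :=
  PowerSeries.mk fun n =>
    PowerSeries.coeff (R := ℚ) n
      (∏ k ∈ Finset.range (n + 1), (1 - (PowerSeries.X : PowerSeries ℚ) ^ (r * (k + 1))))

/-- The formal logarithm of a power series with constant coefficient `1`:
`log f = −∑_{k≥1} (1 − f)^k / k`.  Since `1 − f` has zero constant term, `(1 − f)^k` does not
contribute to the `n`-th coefficient when `k > n` (and the `k = 0` term vanishes since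
division by zero is zero). -/
def logPS (f : PowerSeries ℚ) : PowerSeries ℚ :=
  PowerSeries.mk fun n =>
    - ∑ k ∈ Finset.range (n + 1), PowerSeries.coeff (R := ℚ) n ((1 - f) ^ k) / (k : ℚ)

/-- The formal exponential of a power series with constant coefficient `0`:
`exp f = ∑_{k≥0} f^k / k!`.  Since `f` has zero constant term, `f^k` does not contribute to
the `n`-th coefficient when `k > n`. -/
def expPS (f : PowerSeries ℚ) : PowerSeries ℚ :=
  PowerSeries.mk fun n =>
    ∑ k ∈ Finset.range (n + 1), PowerSeries.coeff (R := ℚ) n (f ^ k) / (Nat.factorial k : ℚ)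

namespace Stmt7Aux
open PowerSeries Finset

def D (f : PowerSeries ℚ) : PowerSeries ℚ := X * f.derivativeFun

lemma coeff_D (f : PowerSeries ℚ) (n : ℕ) : coeff (R := ℚ) n (D f) = (n : ℚ) * coeff (R := ℚ) n f := by
  cases n with
  | zero => simp [D]
  | succ n => rw [D, coeff_succ_X_mul, show f.derivativeFun = d⁄dX ℚ f from rfl, coeff_derivative]; push_cast; ring

lemma D_mul (f g : PowerSeries ℚ) : D (f * g) = D f * g + f * D g := by
  rw [D, D, D, derivativeFun_mul]; simp only [smul_eq_mul]; ring

lemma D_one : D 1 = 0 := by rw [D, derivativeFun_one, mul_zero]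

lemma D_pow (f : PowerSeries ℚ) (k : ℕ) :
    D (f ^ (k + 1)) = C (R := ℚ) (k + 1) * (f ^ k * D f) := by
  induction k with
  | zero => simp
  | succ k ih =>
      rw [pow_succ, D_mul, ih]
      simp only [Nat.cast_add, Nat.cast_one, map_add, map_one]
      ring

/-- coefficient function of `-m X^m/(1-X^m)` -/
def sfun (m n : ℕ) : ℚ := if m ∣ n ∧ n ≠ 0 then -(m : ℚ) else 0

def G (m : ℕ) : PowerSeries ℚ := mk (sfun m)

lemma one_sub_mul_G (m : ℕ) (hm : 0 < m) :
    (1 - (X : PowerSeries ℚ) ^ m) * G m = C (R := ℚ) (-(m : ℚ)) * X ^ m := by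
  ext n
  rw [sub_mul, one_mul, map_sub, coeff_C_mul, coeff_X_pow,
    show (X:PowerSeries ℚ)^m * G m = G m * X^m from mul_comm _ _, coeff_mul_X_pow']
  simp only [G, coeff_mk, sfun]
  by_cases h1 : m ≤ n
  · by_cases h2 : m ∣ n
    · have hn0 : n ≠ 0 := by omega
      by_cases h3 : n = m
      · subst h3
        simp [hn0, dvd_refl]
      · have h4 : m ∣ n - m := (Nat.dvd_sub h2 dvd_rfl)
        have h5 : n - m ≠ 0 := by omega
        simp [h1, h2, hn0, h4, h5, h3]
    · have h3 : n ≠ m := by rintro rfl; exact h2 dvd_rfl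
      have h4 : ¬ m ∣ n - m := fun h => h2 (by
        have := Nat.dvd_add h dvd_rfl
        rwa [Nat.sub_add_cancel h1] at this)
      simp [h1, h2, h3, h4]
  · have h3 : n ≠ m := by omega
    have h2 : ¬ (m ∣ n ∧ n ≠ 0) := by
      rintro ⟨hd, hn⟩; exact h1 (Nat.le_of_dvd (Nat.pos_of_ne_zero hn) hd)
    simp [h1, h2, h3]

lemma D_one_sub_X_pow (m : ℕ) (hm : 0 < m) :
    D (1 - (X : PowerSeries ℚ) ^ m) = C (R := ℚ) (-(m : ℚ)) * X ^ m := by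
  ext n
  rw [coeff_D, map_sub, coeff_C_mul, coeff_X_pow, coeff_one]
  by_cases h : n = m
  · subst h; simp [hm.ne']
  · by_cases h0 : n = 0
    · subst h0
      simp [h, show ¬(0 = m) from fun hh => hm.ne' hh.symm]
    · simp [h, h0]

/-- finite product -/
def Q (r N : ℕ) : PowerSeries ℚ :=
  ∏ k ∈ Finset.range N, (1 - (X : PowerSeries ℚ) ^ (r * (k + 1)))

def L (r N : ℕ) : PowerSeries ℚ := ∑ k ∈ Finset.range N, G (r * (k + 1))

lemma D_Q (r : ℕ) (hr : 0 < r) (N : ℕ) : D (Q r N) = L r N * Q r N := by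
  induction N with
  | zero => simp [Q, L, D_one]
  | succ N ih =>
      have hm : 0 < r * (N + 1) := by positivity
      rw [Q, prod_range_succ, ← Q, D_mul, ih, D_one_sub_X_pow _ hm,
        ← one_sub_mul_G _ hm, show L r (N + 1) = L r N + G (r * (N + 1)) from
          sum_range_succ _ _]
      ring

lemma coeff_Q_stable (r : ℕ) (hr : 0 < r) (n N : ℕ) (h : n < N) :
    coeff (R := ℚ) n (Q r N) = coeff (R := ℚ) n (Q r (n + 1)) := by
  induction N with
  | zero => omega
  | succ N ih =>
      rcases Nat.lt_or_ge n N with hlt | hge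
      · rw [← ih hlt]
        have hm : ¬ (r * (N + 1) ≤ n) := by nlinarith
        rw [Q, prod_range_succ, ← Q, mul_sub, mul_one, map_sub, coeff_mul_X_pow',
          if_neg hm, sub_zero]
      · have : n = N := by omega
        subst this; rfl

lemma coeff_P (r : ℕ) (hr : 0 < r) (n N : ℕ) (h : n < N) :
    coeff (R := ℚ) n (pochhammerPS r) = coeff (R := ℚ) n (Q r N) := by
  rw [coeff_Q_stable r hr n N h, pochhammerPS, coeff_mk]; rfl

def Lfull (r : ℕ) : PowerSeries ℚ := mk fun n => ∑ k ∈ Finset.range n, sfun (r * (k + 1)) n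

lemma coeff_L (r : ℕ) (hr : 0 < r) (n N : ℕ) (h : n ≤ N) :
    coeff (R := ℚ) n (L r N) = coeff (R := ℚ) n (Lfull r) := by
  rw [L, map_sum, Lfull, coeff_mk]
  simp only [G, coeff_mk]
  refine (Finset.sum_subset (Finset.range_subset_range.2 h) ?_).symm
  intro k hkN hkn
  rw [Finset.mem_range, not_lt] at hkn
  rw [sfun, if_neg]
  rintro ⟨hd, hn0⟩
  have h1 : r * (k + 1) ≤ n := Nat.le_of_dvd (Nat.pos_of_ne_zero hn0) hd
  have h2 : k + 1 ≤ r * (k + 1) := Nat.le_mul_of_pos_left _ hr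
  omega

lemma coeff_mul_congr {f f' g g' : PowerSeries ℚ} {n : ℕ}
    (hf : ∀ i ≤ n, coeff (R := ℚ) i f = coeff (R := ℚ) i f')
    (hg : ∀ j ≤ n, coeff (R := ℚ) j g = coeff (R := ℚ) j g') :
    coeff (R := ℚ) n (f * g) = coeff (R := ℚ) n (f' * g') := by
  rw [coeff_mul, coeff_mul]
  refine Finset.sum_congr rfl fun p hp => ?_
  rw [Finset.HasAntidiagonal.mem_antidiagonal] at hp
  rw [hf p.1 (by omega), hg p.2 (by omega)]

lemma D_P (r : ℕ) (hr : 0 < r) : D (pochhammerPS r) = Lfull r * pochhammerPS r := by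
  ext n
  rw [coeff_D, coeff_P r hr n (n + 1) (by omega), ← coeff_D, D_Q r hr]
  exact coeff_mul_congr
    (fun i hi => coeff_L r hr i (n + 1) (by omega))
    (fun j hj => (coeff_P r hr j (n + 1) (by omega)).symm)

lemma ode_unique {Lc F G : PowerSeries ℚ} (hL : coeff (R := ℚ) 0 Lc = 0)
    (hF : D F = Lc * F) (hG : D G = Lc * G)
    (h0 : coeff (R := ℚ) 0 F = coeff (R := ℚ) 0 G) : F = G := by
  ext n
  induction n using Nat.strong_induction_on with
  | _ n ih =>
    match n with
    | 0 => exact h0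
    | Nat.succ j =>
      have hco : coeff (R := ℚ) (j + 1) (Lc * F) = coeff (R := ℚ) (j + 1) (Lc * G) := by
        rw [coeff_mul, coeff_mul]
        refine Finset.sum_congr rfl fun p hp => ?_
        rw [Finset.HasAntidiagonal.mem_antidiagonal] at hp
        by_cases hpj : p.2 = j + 1
        · have : p.1 = 0 := by omega
          rw [this, hL, zero_mul, zero_mul]
        · rw [ih p.2 (by omega)]
      have h1 : ((j + 1 : ℕ) : ℚ) * coeff (R := ℚ) (j + 1) F
          = ((j + 1 : ℕ) : ℚ) * coeff (R := ℚ) (j + 1) G := by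
        rw [← coeff_D, ← coeff_D, hF, hG]; exact hco
      exact mul_left_cancel₀ (by positivity) h1

lemma coeff_pow_lt {f : PowerSeries ℚ} (hf : constantCoeff (R := ℚ) f = 0) {n k : ℕ}
    (h : n < k) : coeff (R := ℚ) n (f ^ k) = 0 := by
  obtain ⟨g, rfl⟩ := X_dvd_iff.2 hf
  rw [mul_pow, mul_comm, coeff_mul_X_pow', if_neg (by omega)]

def T (E : PowerSeries ℚ) (n : ℕ) : PowerSeries ℚ :=
  ∑ k ∈ Finset.range (n + 1), C (R := ℚ) ((Nat.factorial k : ℚ)⁻¹) * E ^ k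

lemma coeff_exp_eq {E : PowerSeries ℚ} (hE : constantCoeff (R := ℚ) E = 0) {n j : ℕ}
    (hj : j ≤ n) : coeff (R := ℚ) j (expPS E) = coeff (R := ℚ) j (T E n) := by
  rw [expPS, coeff_mk, T, map_sum]
  simp only [coeff_C_mul]
  refine Finset.sum_subset (Finset.range_subset_range.2 (by omega)) ?_ |>.trans
    (Finset.sum_congr rfl fun k _ => ?_)
  · intro k hkN hkj
    rw [Finset.mem_range, not_lt] at hkj
    rw [coeff_pow_lt hE (by omega), zero_div]
  · rw [div_eq_inv_mul]

lemma coeff_D_zero (f : PowerSeries ℚ) : coeff (R := ℚ) 0 (D f) = 0 := by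
  rw [coeff_D]; simp

lemma D_exp {E : PowerSeries ℚ} (hE : constantCoeff (R := ℚ) E = 0) :
    D (expPS E) = D E * expPS E := by
  ext n
  -- RHS
  have hR : coeff (R := ℚ) n (D E * expPS E) = coeff (R := ℚ) n (D E * T E n) :=
    coeff_mul_congr (fun i _ => rfl) (fun j hj => coeff_exp_eq hE hj)
  have hTn : D E * T E n = ∑ k ∈ Finset.range (n + 1),
      C (R := ℚ) ((Nat.factorial k : ℚ)⁻¹) * (D E * E ^ k) := by
    rw [T, Finset.mul_sum]
    exact Finset.sum_congr rfl fun k _ => by ring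
  have hlast : coeff (R := ℚ) n (D E * E ^ n) = 0 := by
    rw [coeff_mul]
    refine Finset.sum_eq_zero fun p hp => ?_
    rw [Finset.HasAntidiagonal.mem_antidiagonal] at hp
    by_cases h : p.2 = n
    · have : p.1 = 0 := by omega
      rw [this, coeff_D_zero, zero_mul]
    · rw [coeff_pow_lt hE (by omega), mul_zero]
  have hRHS : coeff (R := ℚ) n (D E * expPS E)
      = ∑ k ∈ Finset.range n, (Nat.factorial k : ℚ)⁻¹ * coeff (R := ℚ) n (D E * E ^ k) := by
    rw [hR, hTn, map_sum]
    simp only [coeff_C_mul]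
    rw [Finset.sum_range_succ, hlast, mul_zero, add_zero]
  -- LHS
  have hLHS : coeff (R := ℚ) n (D (expPS E))
      = ∑ k ∈ Finset.range n, (Nat.factorial k : ℚ)⁻¹ * coeff (R := ℚ) n (D E * E ^ k) := by
    rw [coeff_D, expPS, coeff_mk, Finset.mul_sum]
    rw [Finset.sum_range_succ']
    have h0 : (n : ℚ) * (coeff (R := ℚ) n (E ^ 0) / (Nat.factorial 0 : ℚ))
        = (0 : ℚ) ∨ n = 0 := by
      rcases Nat.eq_zero_or_pos n with h | h
      · right; exact h
      · left
        rw [pow_zero, coeff_one, if_neg h.ne', zero_div, mul_zero]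
    rcases h0 with h0 | h0
    · rw [h0, add_zero]
      refine Finset.sum_congr rfl fun j hj => ?_
      have h1 : (n : ℚ) * coeff (R := ℚ) n (E ^ (j + 1))
          = ((j : ℚ) + 1) * coeff (R := ℚ) n (D E * E ^ j) := by
        rw [← coeff_D, D_pow, coeff_C_mul, mul_comm (E ^ j) (D E)]
      have h2 : ((Nat.factorial (j + 1) : ℚ)) = ((j : ℚ) + 1) * (Nat.factorial j : ℚ) := by
        rw [Nat.factorial_succ]; push_cast; ring
      have hj1 : ((j : ℚ) + 1) ≠ 0 := by positivity
      have hjf : ((Nat.factorial j : ℚ)) ≠ 0 :=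
        Nat.cast_ne_zero.2 (Nat.factorial_ne_zero j)
      calc (n : ℚ) * (coeff (R := ℚ) n (E ^ (j + 1)) / (Nat.factorial (j + 1) : ℚ))
          = ((n : ℚ) * coeff (R := ℚ) n (E ^ (j + 1))) / (((j : ℚ) + 1) * (Nat.factorial j : ℚ)) := by
            rw [h2]; ring
        _ = (((j : ℚ) + 1) * coeff (R := ℚ) n (D E * E ^ j)) / (((j : ℚ) + 1) * (Nat.factorial j : ℚ)) := by
            rw [h1]
        _ = (Nat.factorial j : ℚ)⁻¹ * coeff (R := ℚ) n (D E * E ^ j) := by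
            rw [mul_div_mul_left _ _ hj1, div_eq_inv_mul]
    · subst h0
      simp [coeff_D_zero]
  rw [hLHS, hRHS]

lemma sum_range_sigma (n : ℕ) :
    ∑ k ∈ Finset.range n, (if (k + 1) ∣ n then ((k + 1 : ℕ) : ℚ) else 0)
      = (sigma' n : ℚ) := by
  rcases Nat.eq_zero_or_pos n with rfl | hn
  · simp [sigma']
  rw [sigma']
  push_cast
  rw [show (n : ℕ).divisors = Finset.filter (· ∣ n) (Finset.Ico 1 (n + 1)) from rfl,
    Finset.sum_filter, Finset.sum_Ico_eq_sum_range]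
  simp only [show n + 1 - 1 = n from rfl]
  refine Finset.sum_congr rfl fun k hk => ?_
  rw [add_comm 1 k]
  split_ifs <;> simp

lemma coeff_Lfull_one (n : ℕ) : coeff (R := ℚ) n (Lfull 1) = -(sigma' n : ℚ) := by
  rw [Lfull, coeff_mk, ← sum_range_sigma n]
  rcases Nat.eq_zero_or_pos n with rfl | hn
  · simp
  rw [← Finset.sum_neg_distrib]
  refine Finset.sum_congr rfl fun k hk => ?_
  rw [sfun, one_mul]
  by_cases h : (k + 1) ∣ n
  · rw [if_pos ⟨h, hn.ne'⟩, if_pos h]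
  · rw [if_neg (fun hc => h hc.1), if_neg h, neg_zero]

lemma coeff_Lfull_seven (n : ℕ) :
    coeff (R := ℚ) n (Lfull 7) =
      if 7 ∣ n then -(7 : ℚ) * (sigma' (n / 7) : ℚ) else 0 := by
  rw [Lfull, coeff_mk]
  by_cases h7 : 7 ∣ n
  · obtain ⟨u, rfl⟩ := h7
    rcases Nat.eq_zero_or_pos u with rfl | hu
    · simp [sfun, sigma']
    rw [if_pos ⟨u, rfl⟩, Nat.mul_div_cancel_left u (by norm_num),
      ← sum_range_sigma u, Finset.mul_sum]
    have step1 : ∀ k : ℕ, sfun (7 * (k + 1)) (7 * u)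
        = -(7 : ℚ) * (if (k + 1) ∣ u then ((k + 1 : ℕ) : ℚ) else 0) := by
      intro k
      rw [sfun]
      have hdd : 7 * (k + 1) ∣ 7 * u ↔ (k + 1) ∣ u := mul_dvd_mul_iff_left (by norm_num)
      by_cases hd : (k + 1) ∣ u
      · rw [if_pos ⟨hdd.2 hd, by positivity⟩, if_pos hd]
        push_cast; ring
      · rw [if_neg (fun hc => hd (hdd.1 hc.1)), if_neg hd, mul_zero]
    simp only [step1]
    refine (Finset.sum_subset (Finset.range_subset_range.2 (by nlinarith : u ≤ 7 * u)) ?_).symm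
    intro k hk hknu
    rw [Finset.mem_range, not_lt] at hknu
    rw [if_neg (fun hd => absurd (Nat.le_of_dvd hu hd) (by omega)), mul_zero]
  · rw [if_neg h7]
    refine Finset.sum_eq_zero fun k hk => ?_
    rw [sfun, if_neg]
    rintro ⟨hd, -⟩
    exact h7 (dvd_trans ⟨k + 1, rfl⟩ hd)

lemma prime7 : Nat.Prime 7 := by norm_num

lemma sigma_pp (m : ℕ) : (sigma' (7 ^ m) : ℚ) = ((7 : ℚ) ^ (m + 1) - 1) / 6 := by
  rw [sigma', Nat.sum_divisors_prime_pow prime7]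
  push_cast
  rw [geom_sum_eq (by norm_num : (7 : ℚ) ≠ 1)]
  norm_num

lemma sigma_mul_cop (m n' : ℕ) (h7 : ¬ 7 ∣ n') :
    (sigma' (7 ^ m * n') : ℚ) = (sigma' (7 ^ m) : ℚ) * (sigma' n' : ℚ) := by
  have hcop : Nat.Coprime (7 ^ m) n' :=
    Nat.Coprime.pow_left m ((Nat.Prime.coprime_iff_not_dvd prime7).2 h7)
  rw [sigma', sigma', sigma', hcop.sum_divisors_mul]
  push_cast; ring

lemma pow7_sub_one_ne (j : ℕ) : (7 : ℚ) ^ (j + 1) - 1 ≠ 0 := by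
  have : (1 : ℚ) < 7 ^ (j + 1) := by
    apply one_lt_pow₀ (by norm_num) (by omega)
  linarith

lemma key (e : ℕ → ℚ)
    (he : ∀ m n' : ℕ, ¬ 7 ∣ n' →
      e (7 ^ m * n') = ((sigma' (7 ^ m * n') : ℚ) / ((7 ^ m * n' : ℕ) : ℚ)) *
        (1 + 42 / (7 ^ (m + 1) - 1)))
    (n : ℕ) (hn : n ≠ 0) :
    (n : ℚ) * e n = 8 * (sigma' n : ℚ)
      - (if 7 ∣ n then 49 * (sigma' (n / 7) : ℚ) else 0) := by
  obtain ⟨m, n', h7, rfl⟩ : ∃ m n' : ℕ, ¬ 7 ∣ n' ∧ n = 7 ^ m * n' :=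
    ⟨n.factorization 7, n / 7 ^ (n.factorization 7),
      Nat.not_dvd_ordCompl prime7 hn,
      (Nat.ordProj_mul_ordCompl_eq_self n 7).symm⟩
  have hn' : n' ≠ 0 := by rintro rfl; simp at hn
  have hnQ : ((7 ^ m * n' : ℕ) : ℚ) ≠ 0 := Nat.cast_ne_zero.2 hn
  rw [he m n' h7, sigma_mul_cop m n' h7, sigma_pp]
  cases m with
  | zero =>
    rw [if_neg (by simpa using h7)]
    field_simp
    ring
  | succ k =>
    have hdvd : 7 ∣ 7 ^ (k + 1) * n' := ⟨7 ^ k * n', by ring⟩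
    rw [if_pos hdvd,
      show 7 ^ (k + 1) * n' / 7 = 7 ^ k * n' by
        rw [pow_succ, mul_comm (7 ^ k) 7, mul_assoc, Nat.mul_div_cancel_left _ (by norm_num)],
      sigma_mul_cop k n' h7, sigma_pp]
    have h1 := pow7_sub_one_ne (k + 1)
    have h2 := pow7_sub_one_ne k
    field_simp
    ring

lemma sigma'_zero : sigma' 0 = 0 := by simp [sigma']

lemma Lmatch (e : ℕ → ℚ)
    (he : ∀ m n' : ℕ, ¬ 7 ∣ n' →
      e (7 ^ m * n') = ((sigma' (7 ^ m * n') : ℚ) / ((7 ^ m * n' : ℕ) : ℚ)) *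
        (1 + 42 / (7 ^ (m + 1) - 1))) :
    D (mk fun n => if n = 0 then 0 else e n) + C (R := ℚ) 8 * Lfull 1 = C (R := ℚ) 7 * Lfull 7 := by
  ext n
  rw [map_add, coeff_C_mul, coeff_C_mul, coeff_D, coeff_mk, coeff_Lfull_one,
    coeff_Lfull_seven]
  rcases Nat.eq_zero_or_pos n with rfl | hn
  · simp [sigma'_zero]
  rw [if_neg hn.ne']
  have hk := key e he n hn.ne'
  by_cases h7 : 7 ∣ n
  · rw [if_pos h7] at hk ⊢; linarith
  · rw [if_neg h7] at hk ⊢; linarith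

lemma constCoeff_P (r : ℕ) (hr : 0 < r) : coeff (R := ℚ) 0 (pochhammerPS r) = 1 := by
  rw [coeff_P r hr 0 1 (by omega), Q, Finset.prod_range_one, map_sub, coeff_one,
    coeff_X_pow, if_pos rfl, if_neg (by omega : ¬ (0 : ℕ) = r * (0 + 1))]
  norm_num

lemma constCoeff_exp (E : PowerSeries ℚ) : coeff (R := ℚ) 0 (expPS E) = 1 := by
  rw [expPS, coeff_mk]
  simp [Nat.factorial]

end Stmt7Aux

open Stmt7Aux PowerSeries

/-- As formal power series over `ℚ`, the series
`H(x) = 49x·(x^7;x^7)_∞^7 / (x;x)_∞^8` satisfies `H(x) = 49x·exp(∑_{n≥1} e_n x^n)`, where for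
`n = 7^m·n'` with `m ≥ 0` and `7 ∤ n'`, `e_n = (σ(n)/n)·(1 + 42/(7^(m+1) − 1))`. -/
theorem stmt7 (e : ℕ → ℚ)
    (he : ∀ m n' : ℕ, ¬ 7 ∣ n' →
      e (7 ^ m * n') = ((sigma' (7 ^ m * n') : ℚ) / ((7 ^ m * n' : ℕ) : ℚ)) *
        (1 + 42 / (7 ^ (m + 1) - 1))) :
    49 * PowerSeries.X * pochhammerPS 7 ^ 7 * (pochhammerPS 1 ^ 8)⁻¹ =
      49 * PowerSeries.X * expPS (PowerSeries.mk fun n => if n = 0 then 0 else e n) := by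
  set Ef : PowerSeries ℚ := PowerSeries.mk fun n => if n = 0 then 0 else e n with hEf
  have hE0 : constantCoeff (R := ℚ) Ef = 0 := by
    rw [← coeff_zero_eq_constantCoeff, hEf, coeff_mk]; simp
  set P1 := pochhammerPS 1
  set P7 := pochhammerPS 7
  set B := expPS Ef with hB
  -- ODE for P7^7
  have h7 : D (P7 ^ 7) = (C (R := ℚ) 7 * Lfull 7) * P7 ^ 7 := by
    rw [show (7 : ℕ) = 6 + 1 from rfl, D_pow, D_P 7 (by norm_num)]
    norm_num
    ring
  -- ODE for B * P1^8
  have h18 : D (B * P1 ^ 8) = (D Ef + C (R := ℚ) 8 * Lfull 1) * (B * P1 ^ 8) := by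
    rw [D_mul, hB, D_exp hE0, show (8 : ℕ) = 7 + 1 from rfl, D_pow,
      D_P 1 (by norm_num)]
    norm_num
    ring
  have hL0 : coeff (R := ℚ) 0 (C (R := ℚ) 7 * Lfull 7) = 0 := by
    rw [coeff_C_mul, Lfull, coeff_mk]
    simp
  have hcP1 : constantCoeff (R := ℚ) P1 = 1 := by
    rw [← coeff_zero_eq_constantCoeff_apply]; exact constCoeff_P 1 (by norm_num)
  have hcP7 : constantCoeff (R := ℚ) P7 = 1 := by
    rw [← coeff_zero_eq_constantCoeff_apply]; exact constCoeff_P 7 (by norm_num)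
  have hcB : constantCoeff (R := ℚ) B = 1 := by
    rw [← coeff_zero_eq_constantCoeff_apply]; exact constCoeff_exp Ef
  have hmain : P7 ^ 7 = B * P1 ^ 8 := by
    refine ode_unique hL0 h7 ?_ ?_
    · rw [h18, Lmatch e he]
    · rw [coeff_zero_eq_constantCoeff_apply, coeff_zero_eq_constantCoeff_apply,
        map_pow, map_mul, map_pow, hcP1, hcP7, hcB]
      norm_num
  have hc : (P1 ^ 8) * (P1 ^ 8)⁻¹ = 1 := by
    refine PowerSeries.mul_inv_cancel _ ?_
    rw [map_pow, hcP1]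
    norm_num
  calc 49 * X * P7 ^ 7 * (P1 ^ 8)⁻¹
      = 49 * X * B * ((P1 ^ 8) * (P1 ^ 8)⁻¹) := by rw [hmain]; ring
    _ = 49 * X * B := by rw [hc, mul_one]
end
end

section
/- As formal power series over ℚ, 7·(x^7;x^7)_∞^3/(x;x)_∞^4 = 7·∑_{n≥0} B_n(1!·d_1, …, n!·d_n) x^n/n!, where B_n denotes the n-th complete exponential Bell polynomial and for n = 7^m·n' with m ≥ 0 and 7 ∤ n', d_n = (σ(n)/n)·(1 + 18/(7^{m+1} − 1)). -/
noncomputable section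

/-- The `n`-th complete exponential Bell polynomial evaluated at `(x_1, x_2, …)`, defined via
the generating identity `exp(∑_{m≥1} x_m t^m/m!) = ∑_{n≥0} B_n(x_1, …, x_n) t^n/n!`
(with `B_0 = 1`): `B_n(x_1, …, x_n)` is `n!` times the `n`-th coefficient of the left side. -/
def bellComplete (x : ℕ → ℚ) (n : ℕ) : ℚ :=
  (Nat.factorial n : ℚ) *
    PowerSeries.coeff (R := ℚ) n
      (expPS (PowerSeries.mk fun m => if m = 0 then 0 else x m / (Nat.factorial m : ℚ)))


/-! ### Auxiliary material for the proof -/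

namespace Stmt10Aux

open PowerSeries Finset

/-- Two power series have the same `n`-th coefficient if their difference is
divisible by `X^(n+1)`. -/
lemma coeff_eq_of_dvd {f g : PowerSeries ℚ} {n : ℕ} (h : (X : PowerSeries ℚ)^(n+1) ∣ f - g) :
    PowerSeries.coeff (R := ℚ) n f = PowerSeries.coeff (R := ℚ) n g := by
  have := (PowerSeries.X_pow_dvd_iff.mp h) n (Nat.lt_succ_self n)
  rw [map_sub, sub_eq_zero] at this
  exact this

lemma coeff_mul_congr {f f₁ g g₁ : PowerSeries ℚ} {n : ℕ}
    (hf : (X : PowerSeries ℚ)^(n+1) ∣ f - f₁) (hg : (X : PowerSeries ℚ)^(n+1) ∣ g - g₁) :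
    PowerSeries.coeff (R := ℚ) n (f * g) = PowerSeries.coeff (R := ℚ) n (f₁ * g₁) := by
  apply coeff_eq_of_dvd
  have h : f * g - f₁ * g₁ = f * (g - g₁) + (f - f₁) * g₁ := by ring
  rw [h]
  exact dvd_add (Dvd.dvd.mul_left hg f) (Dvd.dvd.mul_right hf g₁)

/-- Finite partial products of the Pochhammer product. -/
def prodN (r N : ℕ) : PowerSeries ℚ :=
  ∏ k ∈ Finset.range N, (1 - (X : PowerSeries ℚ) ^ (r * (k + 1)))

lemma prod_congr_one {M : ℕ} {s : Finset ℕ} {f : ℕ → PowerSeries ℚ}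
    (h : ∀ i ∈ s, (X : PowerSeries ℚ)^M ∣ f i - 1) :
    (X : PowerSeries ℚ)^M ∣ (∏ i ∈ s, f i) - 1 := by
  classical
  induction s using Finset.cons_induction with
  | empty => simp
  | cons a s ha ih =>
    rw [Finset.prod_cons]
    have h1 : (X : PowerSeries ℚ)^M ∣ f a - 1 := h a (Finset.mem_cons_self a s)
    have h2 := ih fun i hi => h i (Finset.mem_cons_of_mem hi)
    have e : f a * ∏ i ∈ s, f i - 1 = f a * ((∏ i ∈ s, f i) - 1) + (f a - 1) := by ring
    rw [e]
    exact dvd_add (Dvd.dvd.mul_left h2 _) h1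

lemma prod_stable {r M N : ℕ} (hr : 0 < r) (h : M ≤ N) :
    (X : PowerSeries ℚ)^M ∣ prodN r N - prodN r M := by
  have e : prodN r N = prodN r M * ∏ k ∈ Finset.Ico M N, (1 - (X:PowerSeries ℚ)^(r*(k+1))) := by
    rw [prodN, prodN, Finset.prod_range_mul_prod_Ico _ h]
  have h2 : (X : PowerSeries ℚ)^M ∣
      (∏ k ∈ Finset.Ico M N, (1 - (X:PowerSeries ℚ)^(r*(k+1)))) - 1 := by
    apply prod_congr_one
    intro i hi
    have e2 : (1 : PowerSeries ℚ) - X^(r*(i+1)) - 1 = -(X^(r*(i+1))) := by ring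
    rw [e2, dvd_neg]
    apply pow_dvd_pow
    have := (Finset.mem_Ico.mp hi).1
    nlinarith
  have e3 : prodN r N - prodN r M
      = prodN r M * ((∏ k ∈ Finset.Ico M N, (1 - (X:PowerSeries ℚ)^(r*(k+1)))) - 1) := by
    rw [e]; ring
  rw [e3]
  exact Dvd.dvd.mul_left h2 _

lemma coeff_poch {r : ℕ} (hr : 0 < r) {n N : ℕ} (h : n < N) :
    PowerSeries.coeff (R := ℚ) n (pochhammerPS r) = PowerSeries.coeff (R := ℚ) n (prodN r N) := by
  rw [pochhammerPS, coeff_mk]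
  exact (coeff_eq_of_dvd (prod_stable hr h)).symm

lemma poch_congr {r : ℕ} (hr : 0 < r) (n : ℕ) :
    (X : PowerSeries ℚ)^(n+1) ∣ pochhammerPS r - prodN r (n+1) := by
  rw [PowerSeries.X_pow_dvd_iff]
  intro i hi
  rw [map_sub, sub_eq_zero]
  exact coeff_poch hr hi

lemma poch_const {r : ℕ} (hr : 0 < r) : PowerSeries.constantCoeff (R := ℚ) (pochhammerPS r) = 1 := by
  rw [← PowerSeries.coeff_zero_eq_constantCoeff_apply, pochhammerPS, coeff_mk]
  rw [show (0:ℕ) + 1 = 1 from rfl, Finset.prod_range_one]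
  rw [map_sub, PowerSeries.coeff_one, PowerSeries.coeff_X_pow]
  have h2 : ¬ (0 = r * (0 + 1)) := by omega
  simp [hr.ne]

/-- `u s = -s·(X^s + X^{2s} + ⋯)`, the logarithmic derivative datum of `1 - X^s`. -/
def u (s : ℕ) : PowerSeries ℚ := PowerSeries.mk fun n => if s ∣ n ∧ n ≠ 0 then -(s:ℚ) else 0

/-- `T r` has `n`-th coefficient `r·σ(n/r)` when `r ∣ n`, `n ≠ 0`, else `0`. -/
def T (r : ℕ) : PowerSeries ℚ :=
  PowerSeries.mk fun n => if r ∣ n ∧ n ≠ 0 then (r:ℚ) * (sigma' (n/r) : ℚ) else 0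

lemma X_mul_deriv_factor {s : ℕ} (hs : 0 < s) :
    X * PowerSeries.derivative ℚ (1 - (X:PowerSeries ℚ)^s)
      = u s * (1 - (X:PowerSeries ℚ)^s) := by
  have h1 : X * PowerSeries.derivative ℚ (1 - (X:PowerSeries ℚ)^s)
      = -(PowerSeries.C (R := ℚ) (s:ℚ) * X^s) := by
    rw [map_sub, Derivation.map_one_eq_zero, zero_sub, Derivation.leibniz_pow,
      PowerSeries.derivative_X, smul_eq_mul, mul_one, nsmul_eq_mul]
    have : (s : PowerSeries ℚ) = PowerSeries.C (R := ℚ) (s:ℚ) := by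
      simp [map_natCast]
    rw [this]
    have hX : (X : PowerSeries ℚ) * X^(s-1) = X^s := by
      rw [← pow_succ']
      congr 1
      omega
    ring_nf
    rw [hX]
  rw [h1]
  ext n
  rw [mul_sub, mul_one, map_sub, map_neg, PowerSeries.coeff_C_mul, PowerSeries.coeff_X_pow,
    PowerSeries.coeff_mul_X_pow', u, coeff_mk]
  simp only [coeff_mk]
  by_cases hns : n = s
  · subst hns
    have h1 : n ∣ n ∧ n ≠ 0 := ⟨dvd_rfl, hs.ne'⟩
    rw [if_pos h1, if_pos rfl, if_pos le_rfl, Nat.sub_self]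
    simp [hs.ne']
  · rw [if_neg hns]
    by_cases hdvd : s ∣ n ∧ n ≠ 0
    · rw [if_pos hdvd]
      have hsn : s ≤ n := Nat.le_of_dvd (Nat.pos_of_ne_zero hdvd.2) hdvd.1
      rw [if_pos hsn]
      have h2 : s ∣ n - s ∧ n - s ≠ 0 := by
        constructor
        · exact Nat.dvd_sub hdvd.1 dvd_rfl
        · intro h0
          exact hns (by omega)
      rw [if_pos h2]
      ring
    · rw [if_neg hdvd]
      by_cases hsn : s ≤ n
      · rw [if_pos hsn]
        have h2 : ¬ (s ∣ n - s ∧ n - s ≠ 0) := by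
          intro ⟨ha, hb⟩
          apply hdvd
          have : s ∣ n := by
            have := Nat.dvd_add ha (dvd_refl s)
            rwa [Nat.sub_add_cancel hsn] at this
          exact ⟨this, by omega⟩
        rw [if_neg h2]
        ring
      · rw [if_neg hsn]
        ring

lemma coeff_sum_u {r : ℕ} (hr : 0 < r) {n N : ℕ} (hn : n < N) :
    PowerSeries.coeff (R := ℚ) n (∑ k ∈ Finset.range N, u (r * (k+1)))
      = - PowerSeries.coeff (R := ℚ) n (T r) := by
  rw [map_sum]
  simp only [u, coeff_mk, T]
  rcases eq_or_ne n 0 with rfl | hn0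
  · simp
  by_cases hrn : r ∣ n
  · rw [if_pos ⟨hrn, hn0⟩]
    set M := n / r with hM
    have hnrM : r * M = n := Nat.mul_div_cancel' hrn
    have hM0 : M ≠ 0 := by
      intro h0
      rw [h0, mul_zero] at hnrM
      exact hn0 hnrM.symm
    have hMn : M ≤ n := Nat.div_le_self n r
    have key : ∀ k : ℕ, (r * (k+1) ∣ n ∧ n ≠ 0) ↔ (k+1) ∣ M := by
      intro k
      constructor
      · intro ⟨h1, _⟩
        rw [← hnrM] at h1
        exact (Nat.mul_dvd_mul_iff_left hr).mp h1
      · intro h1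
        exact ⟨by rw [← hnrM]; exact Nat.mul_dvd_mul_left r h1, hn0⟩
    have step1 : ∀ k : ℕ, (if r * (k+1) ∣ n ∧ n ≠ 0 then -((r * (k+1) : ℕ):ℚ) else 0)
        = (if (k+1) ∣ M then -((r:ℚ) * ((k:ℚ)+1)) else 0) := by
      intro k
      rw [if_congr (key k) rfl rfl]
      split
      · push_cast; ring
      · rfl
    rw [Finset.sum_congr rfl fun k _ => step1 k]
    have step2 : ∑ k ∈ Finset.range N, (if (k+1) ∣ M then -((r:ℚ) * ((k:ℚ)+1)) else 0)
        = ∑ j ∈ Finset.Ico 1 (N+1), (if j ∣ M then -((r:ℚ) * (j:ℚ)) else 0) := by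
      rw [Finset.sum_Ico_eq_sum_range]
      simp only [Nat.add_sub_cancel]
      apply Finset.sum_congr rfl
      intro k _
      have : 1 + k = k + 1 := by omega
      rw [this]
      push_cast
      ring_nf
    rw [step2, Finset.sum_ite, Finset.sum_const_zero, add_zero]
    have step3 : Finset.filter (fun j => j ∣ M) (Finset.Ico 1 (N+1)) = M.divisors := by
      rw [Nat.divisors]
      ext j
      simp only [Finset.mem_filter, Finset.mem_Ico]
      constructor
      · intro ⟨⟨h1, _⟩, h3⟩
        exact ⟨⟨h1, by have := Nat.le_of_dvd (Nat.pos_of_ne_zero hM0) h3; omega⟩, h3⟩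
      · intro ⟨⟨h1, h2⟩, h3⟩
        exact ⟨⟨h1, by omega⟩, h3⟩
    rw [step3, sigma']
    push_cast
    rw [Finset.mul_sum, ← Finset.sum_neg_distrib]
  · rw [if_neg (by tauto), neg_zero]
    apply Finset.sum_eq_zero
    intro k _
    rw [if_neg]
    intro ⟨h1, _⟩
    exact hrn (dvd_trans (Dvd.intro _ rfl) h1)

lemma logderiv_prodN (r : ℕ) (hr : 0 < r) (N : ℕ) :
    X * PowerSeries.derivative ℚ (prodN r N)
      = (∑ k ∈ Finset.range N, u (r*(k+1))) * prodN r N := by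
  induction N with
  | zero => simp [prodN, Derivation.map_one_eq_zero]
  | succ N ih =>
    have e : prodN r (N+1) = prodN r N * (1 - (X:PowerSeries ℚ)^(r*(N+1))) := by
      rw [prodN, prodN, Finset.prod_range_succ]
    rw [e, Derivation.leibniz, smul_eq_mul, smul_eq_mul, Finset.sum_range_succ]
    have h1 := X_mul_deriv_factor (s := r*(N+1)) (by positivity)
    calc X * (prodN r N * PowerSeries.derivative ℚ (1 - (X:PowerSeries ℚ)^(r*(N+1)))
            + (1 - (X:PowerSeries ℚ)^(r*(N+1))) * PowerSeries.derivative ℚ (prodN r N))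
        = prodN r N * (X * PowerSeries.derivative ℚ (1 - (X:PowerSeries ℚ)^(r*(N+1))))
            + (1 - (X:PowerSeries ℚ)^(r*(N+1))) * (X * PowerSeries.derivative ℚ (prodN r N)) := by
          ring
      _ = prodN r N * (u (r*(N+1)) * (1 - (X:PowerSeries ℚ)^(r*(N+1))))
            + (1 - (X:PowerSeries ℚ)^(r*(N+1)))
              * ((∑ k ∈ Finset.range N, u (r*(k+1))) * prodN r N) := by rw [h1, ih]
      _ = (∑ k ∈ Finset.range N, u (r*(k+1)) + u (r*(N+1)))
            * (prodN r N * (1 - (X:PowerSeries ℚ)^(r*(N+1)))) := by ring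

lemma poch_logderiv {r : ℕ} (hr : 0 < r) :
    X * PowerSeries.derivative ℚ (pochhammerPS r) = -(T r) * pochhammerPS r := by
  ext n
  cases n with
  | zero =>
    simp only [PowerSeries.coeff_zero_eq_constantCoeff_apply]
    rw [map_mul, map_mul, PowerSeries.constantCoeff_X, zero_mul]
    have hT : PowerSeries.constantCoeff (R := ℚ) (-(T r)) = 0 := by
      rw [map_neg, ← PowerSeries.coeff_zero_eq_constantCoeff_apply, T, coeff_mk]
      simp
    rw [hT, zero_mul]
  | succ m =>
    rw [PowerSeries.coeff_succ_X_mul, PowerSeries.coeff_derivative]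
    have e1 : PowerSeries.coeff (R := ℚ) (m+1) (pochhammerPS r)
        = PowerSeries.coeff (R := ℚ) (m+1) (prodN r (m+2)) := coeff_poch hr (by omega)
    have e2 : PowerSeries.coeff (R := ℚ) (m+1) (X * PowerSeries.derivative ℚ (prodN r (m+2)))
        = PowerSeries.coeff (R := ℚ) (m+1) (prodN r (m+2)) * ((m:ℚ)+1) := by
      rw [PowerSeries.coeff_succ_X_mul, PowerSeries.coeff_derivative]
    have e3 : PowerSeries.coeff (R := ℚ) (m+1) (pochhammerPS r) * ((m:ℚ)+1)
        = PowerSeries.coeff (R := ℚ) (m+1)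
            ((∑ k ∈ Finset.range (m+2), u (r*(k+1))) * prodN r (m+2)) := by
      rw [e1, ← logderiv_prodN r hr (m+2), e2]
    rw [e3]
    apply coeff_mul_congr
    · rw [PowerSeries.X_pow_dvd_iff]
      intro i hi
      rw [map_sub, map_neg, sub_neg_eq_add]
      have hsum : PowerSeries.coeff (R := ℚ) i (∑ k ∈ Finset.range (m+2), u (r*(k+1)))
          = - PowerSeries.coeff (R := ℚ) i (T r) := coeff_sum_u hr hi
      rw [hsum, neg_add_cancel]
    · have := poch_congr hr (m+1)
      have e4 : prodN r (m+2) - pochhammerPS r = -(pochhammerPS r - prodN r (m+2)) := by ring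
      rw [e4, dvd_neg]
      exact this

lemma coeff_pow_eq_zero {h : PowerSeries ℚ} (hh : PowerSeries.constantCoeff (R := ℚ) h = 0)
    {i k : ℕ} (hik : i < k) : PowerSeries.coeff (R := ℚ) i (h ^ k) = 0 := by
  have hd : (X:PowerSeries ℚ)^k ∣ h^k :=
    pow_dvd_pow_of_dvd (PowerSeries.X_dvd_iff.mpr hh) k
  exact PowerSeries.X_pow_dvd_iff.mp hd i hik

/-- Partial sums of the exponential series. -/
def S (h : PowerSeries ℚ) (N : ℕ) : PowerSeries ℚ :=
  ∑ k ∈ Finset.range N, PowerSeries.C (R := ℚ) ((Nat.factorial k : ℚ)⁻¹) * h ^ k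

lemma coeff_exp {h : PowerSeries ℚ} (hh : PowerSeries.constantCoeff (R := ℚ) h = 0)
    {n N : ℕ} (hn : n < N) :
    PowerSeries.coeff (R := ℚ) n (expPS h) = PowerSeries.coeff (R := ℚ) n (S h N) := by
  rw [expPS, coeff_mk, S, map_sum]
  simp only [PowerSeries.coeff_C_mul]
  rw [Finset.sum_congr rfl fun k _ => div_eq_inv_mul (PowerSeries.coeff (R := ℚ) n (h^k)) _]
  apply Finset.sum_subset (Finset.range_subset_range.mpr hn)
  intro k hk hk'
  rw [coeff_pow_eq_zero hh (by simp only [Finset.mem_range, not_lt] at hk'; omega), mul_zero]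

lemma exp_congr {h : PowerSeries ℚ} (hh : PowerSeries.constantCoeff (R := ℚ) h = 0) (n : ℕ) :
    (X : PowerSeries ℚ)^(n+1) ∣ expPS h - S h (n+1) := by
  rw [PowerSeries.X_pow_dvd_iff]
  intro i hi
  rw [map_sub, sub_eq_zero]
  exact coeff_exp hh hi

lemma deriv_S (h : PowerSeries ℚ) (N : ℕ) :
    PowerSeries.derivative ℚ (S h (N+1)) = PowerSeries.derivative ℚ h * S h N := by
  have hterm : ∀ (c : ℚ) (k : ℕ),
      PowerSeries.derivative ℚ (PowerSeries.C (R := ℚ) c * h^(k+1))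
        = PowerSeries.C (R := ℚ) (c*((k:ℚ)+1)) * h^k * PowerSeries.derivative ℚ h := by
    intro c k
    rw [Derivation.leibniz, PowerSeries.derivative_C, smul_zero, add_zero, smul_eq_mul,
      Derivation.leibniz_pow, smul_eq_mul, Nat.add_sub_cancel, nsmul_eq_mul]
    have hcast : ((k+1 : ℕ) : PowerSeries ℚ) = PowerSeries.C (R := ℚ) ((k:ℚ)+1) := by
      push_cast [map_natCast]
      simp
    rw [hcast, map_mul]
    ring
  rw [S, map_sum, Finset.sum_range_succ']
  have h0 : PowerSeries.derivative ℚ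
      (PowerSeries.C (R := ℚ) ((Nat.factorial 0 : ℚ)⁻¹) * h ^ 0) = 0 := by
    simp [Derivation.map_one_eq_zero]
  rw [h0, add_zero]
  rw [Finset.sum_congr rfl fun k _ => hterm ((Nat.factorial (k+1) : ℚ)⁻¹) k]
  have hfac : ∀ k : ℕ, ((Nat.factorial (k+1) : ℚ)⁻¹ * ((k:ℚ)+1)) = (Nat.factorial k : ℚ)⁻¹ := by
    intro k
    have h1 : (Nat.factorial (k+1) : ℚ) = ((k:ℚ)+1) * (Nat.factorial k : ℚ) := by
      rw [Nat.factorial_succ]; push_cast; ring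
    have h2 : (Nat.factorial k : ℚ) ≠ 0 := Nat.cast_ne_zero.mpr (Nat.factorial_ne_zero k)
    have h3 : ((k:ℚ)+1) ≠ 0 := by positivity
    rw [h1]
    field_simp
  rw [Finset.sum_congr rfl fun k _ => by rw [hfac k]]
  rw [S, Finset.mul_sum]
  apply Finset.sum_congr rfl
  intro k _
  ring

lemma exp_deriv {h : PowerSeries ℚ} (hh : PowerSeries.constantCoeff (R := ℚ) h = 0) :
    PowerSeries.derivative ℚ (expPS h) = PowerSeries.derivative ℚ h * expPS h := by
  ext n
  rw [PowerSeries.coeff_derivative, coeff_exp hh (show n+1 < n+2 by omega),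
    ← PowerSeries.coeff_derivative, deriv_S h (n+1)]
  apply coeff_mul_congr
  · rw [sub_self]
    exact dvd_zero _
  · have := exp_congr hh n
    have e : S h (n+1) - expPS h = -(expPS h - S h (n+1)) := by ring
    rw [e, dvd_neg]
    exact this

lemma exp_const (h : PowerSeries ℚ) : PowerSeries.constantCoeff (R := ℚ) (expPS h) = 1 := by
  rw [← PowerSeries.coeff_zero_eq_constantCoeff_apply, expPS, coeff_mk]
  simp

lemma sigma'_pow7 (m : ℕ) : (sigma' (7^m) : ℚ) = ((7:ℚ)^(m+1) - 1)/6 := by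
  have h7 : Nat.Prime 7 := by norm_num
  have h1 : sigma' (7^m) = ∑ k ∈ Finset.range (m+1), 7^k := by
    rw [sigma', ← ArithmeticFunction.sigma_one_apply,
      ArithmeticFunction.sigma_one_apply_prime_pow h7]
  rw [h1]
  push_cast
  rw [geom_sum_eq (by norm_num : (7:ℚ) ≠ 1)]
  norm_num

lemma sigma'_mul_coprime {a b : ℕ} (h : Nat.Coprime a b) :
    sigma' (a*b) = sigma' a * sigma' b := by
  have := (ArithmeticFunction.isMultiplicative_sigma (k := 1)).map_mul_of_coprime h
  simpa [sigma', ← ArithmeticFunction.sigma_one_apply] using this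

lemma pow7_sub_one_ne (m : ℕ) : (7:ℚ)^(m+1) - 1 ≠ 0 := by
  have h1 : (7:ℚ)^(m+1) ≥ 7^1 := by
    apply pow_le_pow_right₀ (by norm_num)
    omega
  norm_num at h1 ⊢
  nlinarith

lemma arith (d : ℕ → ℚ)
    (hd : ∀ m n' : ℕ, ¬ 7 ∣ n' →
      d (7 ^ m * n') = ((sigma' (7 ^ m * n') : ℚ) / ((7 ^ m * n' : ℕ) : ℚ)) *
        (1 + 18 / (7 ^ (m + 1) - 1)))
    {n : ℕ} (hn : n ≠ 0) :
    (n : ℚ) * d n = 4 * (sigma' n : ℚ) - (if 7 ∣ n then 21 * (sigma' (n/7) : ℚ) else 0) := by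
  have h7 : Nat.Prime 7 := by norm_num
  obtain ⟨m, n', heq, hn'7⟩ : ∃ m n', 7^m * n' = n ∧ ¬ 7 ∣ n' :=
    ⟨n.factorization 7, n / 7^(n.factorization 7),
      Nat.ordProj_mul_ordCompl_eq_self n 7, Nat.not_dvd_ordCompl h7 hn⟩
  subst heq
  have hn'0 : n' ≠ 0 := by
    intro h0
    rw [h0, mul_zero] at hn
    exact hn rfl
  have hcop : ∀ j : ℕ, Nat.Coprime (7^j) n' :=
    fun j => Nat.Coprime.pow_left _ ((Nat.Prime.coprime_iff_not_dvd h7).mpr hn'7)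
  have hdn := hd m n' hn'7
  have hq0 : ((7^m * n' : ℕ):ℚ) ≠ 0 := Nat.cast_ne_zero.mpr hn
  cases m with
  | zero =>
    rw [if_neg (by simpa using hn'7)]
    rw [hdn]
    have e1 : (7:ℚ)^(0+1) - 1 = 6 := by norm_num
    rw [e1]
    simp only [pow_zero, one_mul] at *
    field_simp
    ring
  | succ k =>
    have hdvd : 7 ∣ 7^(k+1) * n' := ⟨7^k * n', by ring⟩
    rw [if_pos hdvd]
    have hdiv : (7^(k+1) * n') / 7 = 7^k * n' := by
      have e : 7^(k+1) * n' = 7 * (7^k * n') := by ring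
      rw [e, Nat.mul_div_cancel_left _ (by norm_num)]
    rw [hdiv]
    have hσ1 : (sigma' (7^(k+1) * n') : ℚ) = (((7:ℚ)^(k+2) - 1)/6) * (sigma' n' : ℚ) := by
      rw [sigma'_mul_coprime (hcop (k+1))]
      push_cast
      rw [sigma'_pow7]
    have hσ2 : (sigma' (7^k * n') : ℚ) = (((7:ℚ)^(k+1) - 1)/6) * (sigma' n' : ℚ) := by
      rw [sigma'_mul_coprime (hcop k)]
      push_cast
      rw [sigma'_pow7]
    rw [hdn, hσ1, hσ2]
    have hA : (7:ℚ)^(k+1+1) - 1 ≠ 0 := pow7_sub_one_ne (k+1)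
    have hA' : (7:ℚ)^(k+2) - 1 ≠ 0 := by
      have : k+2 = k+1+1 := rfl
      rw [this]; exact hA
    field_simp
    ring

lemma L_eq (d : ℕ → ℚ)
    (hd : ∀ m n' : ℕ, ¬ 7 ∣ n' →
      d (7 ^ m * n') = ((sigma' (7 ^ m * n') : ℚ) / ((7 ^ m * n' : ℕ) : ℚ)) *
        (1 + 18 / (7 ^ (m + 1) - 1))) :
    X * PowerSeries.derivative ℚ (PowerSeries.mk fun m => if m = 0 then 0 else d m)
      = PowerSeries.C (R := ℚ) 4 * T 1 - PowerSeries.C (R := ℚ) 3 * T 7 := by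
  have hT1 : PowerSeries.constantCoeff (R := ℚ) (T 1) = 0 := by
    rw [← PowerSeries.coeff_zero_eq_constantCoeff_apply, T, coeff_mk]; simp
  have hT7 : PowerSeries.constantCoeff (R := ℚ) (T 7) = 0 := by
    rw [← PowerSeries.coeff_zero_eq_constantCoeff_apply, T, coeff_mk]; simp
  ext n
  cases n with
  | zero =>
    simp only [PowerSeries.coeff_zero_eq_constantCoeff_apply]
    rw [map_mul, PowerSeries.constantCoeff_X, zero_mul, map_sub, map_mul, map_mul, hT1, hT7]
    norm_num
  | succ m =>
    rw [PowerSeries.coeff_succ_X_mul, PowerSeries.coeff_derivative, coeff_mk,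
      if_neg (Nat.succ_ne_zero m), map_sub, PowerSeries.coeff_C_mul, PowerSeries.coeff_C_mul,
      T, T, coeff_mk, coeff_mk, if_pos ⟨one_dvd _, Nat.succ_ne_zero m⟩, Nat.div_one]
    have harith := arith d hd (Nat.succ_ne_zero m)
    by_cases h7 : 7 ∣ (m+1)
    · rw [if_pos (⟨h7, Nat.succ_ne_zero m⟩ : 7 ∣ (m+1) ∧ (m+1) ≠ 0)]
      rw [if_pos h7] at harith
      push_cast at harith ⊢
      linarith
    · rw [if_neg (by tauto : ¬ (7 ∣ (m+1) ∧ (m+1) ≠ 0))]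
      rw [if_neg h7] at harith
      push_cast at harith ⊢
      linarith

lemma prodrule {f₁ f₂ a b : PowerSeries ℚ}
    (h₁ : X * PowerSeries.derivative ℚ f₁ = a * f₁)
    (h₂ : X * PowerSeries.derivative ℚ f₂ = b * f₂) :
    X * PowerSeries.derivative ℚ (f₁ * f₂) = (a + b) * (f₁ * f₂) := by
  rw [Derivation.leibniz, smul_eq_mul, smul_eq_mul]
  calc X * (f₁ * PowerSeries.derivative ℚ f₂ + f₂ * PowerSeries.derivative ℚ f₁)
      = f₁ * (X * PowerSeries.derivative ℚ f₂) + f₂ * (X * PowerSeries.derivative ℚ f₁) := by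
        ring
    _ = f₁ * (b * f₂) + f₂ * (a * f₁) := by rw [h₁, h₂]
    _ = (a + b) * (f₁ * f₂) := by ring

end Stmt10Aux

open Stmt10Aux PowerSeries

/-- As formal power series over `ℚ`,
`7·(x^7;x^7)_∞^3/(x;x)_∞^4 = 7·∑_{n≥0} B_n(1!·d_1, …, n!·d_n) x^n/n!`, where `B_n` is the
`n`-th complete exponential Bell polynomial and for `n = 7^m·n'` with `m ≥ 0` and `7 ∤ n'`,
`d_n = (σ(n)/n)·(1 + 18/(7^(m+1) − 1))`. -/
theorem stmt10 (d : ℕ → ℚ)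
    (hd : ∀ m n' : ℕ, ¬ 7 ∣ n' →
      d (7 ^ m * n') = ((sigma' (7 ^ m * n') : ℚ) / ((7 ^ m * n' : ℕ) : ℚ)) *
        (1 + 18 / (7 ^ (m + 1) - 1))) :
    7 * pochhammerPS 7 ^ 3 * (pochhammerPS 1 ^ 4)⁻¹ =
      7 * PowerSeries.mk (fun n =>
        bellComplete (fun m => (Nat.factorial m : ℚ) * d m) n / (Nat.factorial n : ℚ)) := by
  classical
  set g : PowerSeries ℚ := PowerSeries.mk (fun m => if m = 0 then 0 else d m) with hgdef
  have hg0 : PowerSeries.constantCoeff (R := ℚ) g = 0 := by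
    rw [hgdef, ← PowerSeries.coeff_zero_eq_constantCoeff_apply, coeff_mk]
    simp
  -- the right-hand side is `expPS g`
  have hser : (PowerSeries.mk fun m =>
      if m = 0 then 0 else ((Nat.factorial m : ℚ) * d m) / (Nat.factorial m : ℚ)) = g := by
    rw [hgdef]
    apply PowerSeries.ext
    intro m
    rw [coeff_mk, coeff_mk]
    by_cases hm : m = 0
    · simp [hm]
    · rw [if_neg hm, if_neg hm, mul_div_cancel_left₀]
      exact Nat.cast_ne_zero.mpr (Nat.factorial_ne_zero m)
  have hRHS : (PowerSeries.mk fun n =>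
      bellComplete (fun m => (Nat.factorial m : ℚ) * d m) n / (Nat.factorial n : ℚ)) = expPS g := by
    apply PowerSeries.ext
    intro n
    rw [coeff_mk]
    simp only [bellComplete]
    rw [hser, mul_comm, mul_div_assoc,
      div_self (Nat.cast_ne_zero.mpr (Nat.factorial_ne_zero n)), mul_one]
  -- logarithmic derivative equations
  have h7 : X * PowerSeries.derivative ℚ (pochhammerPS 7) = -(T 7) * pochhammerPS 7 :=
    poch_logderiv (by norm_num)
  have h1 : X * PowerSeries.derivative ℚ (pochhammerPS 1) = -(T 1) * pochhammerPS 1 :=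
    poch_logderiv (by norm_num)
  have hL : X * PowerSeries.derivative ℚ g = PowerSeries.C (R := ℚ) 4 * T 1 - PowerSeries.C (R := ℚ) 3 * T 7 := by
    rw [hgdef]; exact L_eq d hd
  have hE' : X * PowerSeries.derivative ℚ (expPS g)
      = (PowerSeries.C (R := ℚ) 4 * T 1 - PowerSeries.C (R := ℚ) 3 * T 7) * expPS g := by
    rw [exp_deriv hg0, ← mul_assoc, hL]
  set A := pochhammerPS 7 ^ 3 with hAdef
  set B := expPS g * pochhammerPS 1 ^ 4 with hBdef
  have hA : X * PowerSeries.derivative ℚ A = (-(T 7) + (-(T 7) + -(T 7))) * A := by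
    have eA : A = pochhammerPS 7 * (pochhammerPS 7 * pochhammerPS 7) := by
      rw [hAdef]; ring
    rw [eA]
    exact prodrule h7 (prodrule h7 h7)
  have hB : X * PowerSeries.derivative ℚ B
      = ((PowerSeries.C (R := ℚ) 4 * T 1 - PowerSeries.C (R := ℚ) 3 * T 7)
          + (-(T 1) + (-(T 1) + (-(T 1) + -(T 1))))) * B := by
    have eB : B = expPS g * (pochhammerPS 1 * (pochhammerPS 1 * (pochhammerPS 1 * pochhammerPS 1))) := by
      rw [hBdef]; ring
    rw [eB]
    exact prodrule hE' (prodrule h1 (prodrule h1 (prodrule h1 h1)))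
  have hcoef : (-(T 7) + (-(T 7) + -(T 7)))
      = ((PowerSeries.C (R := ℚ) 4 * T 1 - PowerSeries.C (R := ℚ) 3 * T 7)
          + (-(T 1) + (-(T 1) + (-(T 1) + -(T 1))))) := by
    have e4 : (PowerSeries.C (R := ℚ) 4 : PowerSeries ℚ) = 4 := by
      rw [map_ofNat]
    have e3 : (PowerSeries.C (R := ℚ) 3 : PowerSeries ℚ) = 3 := by
      rw [map_ofNat]
    rw [e4, e3]; ring
  have hDab : PowerSeries.derivative ℚ A * B = PowerSeries.derivative ℚ B * A := by
    have hx : X * (PowerSeries.derivative ℚ A * B) = X * (PowerSeries.derivative ℚ B * A) := by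
      calc X * (PowerSeries.derivative ℚ A * B) = (X * PowerSeries.derivative ℚ A) * B := by ring
        _ = ((-(T 7) + (-(T 7) + -(T 7))) * A) * B := by rw [hA]
        _ = (((PowerSeries.C (R := ℚ) 4 * T 1 - PowerSeries.C (R := ℚ) 3 * T 7)
              + (-(T 1) + (-(T 1) + (-(T 1) + -(T 1))))) * B) * A := by rw [← hcoef]; ring
        _ = (X * PowerSeries.derivative ℚ B) * A := by rw [hB]
        _ = X * (PowerSeries.derivative ℚ B * A) := by ring
    exact mul_left_cancel₀ PowerSeries.X_ne_zero hx
  have hcA : PowerSeries.constantCoeff (R := ℚ) A = 1 := by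
    rw [hAdef, map_pow, poch_const (by norm_num), one_pow]
  have hcB : PowerSeries.constantCoeff (R := ℚ) B = 1 := by
    rw [hBdef, map_mul, map_pow, exp_const, poch_const (by norm_num), one_pow, mul_one]
  have hBne : PowerSeries.constantCoeff (R := ℚ) B ≠ 0 := by rw [hcB]; norm_num
  have hBinv : B * B⁻¹ = 1 := PowerSeries.mul_inv_cancel _ hBne
  have hinvB : B⁻¹ * B = 1 := PowerSeries.inv_mul_cancel _ hBne
  have hAB : A = B := by
    have hone : A * B⁻¹ = 1 := by
      apply PowerSeries.derivative.ext
      · rw [Derivation.map_one_eq_zero, Derivation.leibniz, smul_eq_mul, smul_eq_mul,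
          PowerSeries.derivative_inv']
        have eB : B⁻¹ = B⁻¹^2 * B := by rw [pow_two, mul_assoc, hinvB, mul_one]
        have e : A * (-B⁻¹^2 * PowerSeries.derivative ℚ B) + B⁻¹ * PowerSeries.derivative ℚ A
            = B⁻¹^2 * (PowerSeries.derivative ℚ A * B)
              - B⁻¹^2 * (PowerSeries.derivative ℚ B * A) := by
          calc A * (-B⁻¹^2 * PowerSeries.derivative ℚ B) + B⁻¹ * PowerSeries.derivative ℚ A
              = A * (-B⁻¹^2 * PowerSeries.derivative ℚ B)
                + (B⁻¹^2 * B) * PowerSeries.derivative ℚ A := by rw [← eB]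
            _ = _ := by ring
        rw [e, hDab, sub_self]
      · rw [map_mul, hcA, one_mul, map_one]
        have hc : PowerSeries.constantCoeff (R := ℚ) B * PowerSeries.constantCoeff (R := ℚ) B⁻¹ = 1 := by
          rw [← map_mul, hBinv, map_one]
        rw [hcB, one_mul] at hc
        exact hc
    calc A = A * (B⁻¹ * B) := by rw [hinvB, mul_one]
      _ = (A * B⁻¹) * B := by ring
      _ = B := by rw [hone, one_mul]
  rw [hRHS]
  have hP1ne : PowerSeries.constantCoeff (R := ℚ) (pochhammerPS 1 ^ 4) ≠ 0 := by
    rw [map_pow, poch_const (by norm_num), one_pow]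
    norm_num
  have hfin : A * (pochhammerPS 1 ^ 4)⁻¹ = expPS g := by
    rw [hAB, hBdef, mul_assoc, PowerSeries.mul_inv_cancel _ hP1ne, mul_one]
  rw [mul_assoc, hfin]
end
end
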